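/- Let H be a digraph and W = x₀, x₁, …, x_k a walk in H such that (1) for every j with 0 ≤ j ≤ k−1 there exists a colour c_j ∈ V(H) with (x_j, c_j) ∉ A(H), and (2) (x_k, x₀) ∉ A(H). Then H is not a panchromatic pattern. -/

import Mathlib

/-- A walk in `D` (as a list of at least two vertices) whose sequence of
arc-colours (given by `ς`) forms a walk in `H`. -/
def IsHWalk {V W : Type} (D : V → V → Prop) (H : W → W → Prop) (ς : V → V → W)
    (l : List V) : Prop :=
  2 ≤ l.length ∧ l.Chain' D ∧ ((l.zip l.tail).map fun p => ς p.1 p.2).Chain' H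

/-- There is an `H`-walk in `D` from `a` to `b`. -/
def HReach {V W : Type} (D : V → V → Prop) (H : W → W → Prop) (ς : V → V → W)
    (a b : V) : Prop :=
  ∃ l : List V, IsHWalk D H ς l ∧ l.head? = some a ∧ l.getLast? = some b

/-- `K` is an `H`-kernel of the `H`-coloured digraph `D`: it is `H`-independent
and `H`-absorbent. -/
def IsHKernel {V W : Type} (D : V → V → Prop) (H : W → W → Prop) (ς : V → V → W)
    (K : Set V) : Prop :=
  (∀ a ∈ K, ∀ b ∈ K, a ≠ b → ¬ HReach D H ς a b) ∧
  (∀ v, v ∉ K → ∃ b ∈ K, HReach D H ς v b)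

/-- `H` is a panchromatic pattern: every digraph with every `H`-colouring
admits an `H`-kernel. -/
def IsPanchromatic {W : Type} (H : W → W → Prop) : Prop :=
  ∀ (V : Type) (D : V → V → Prop) (ς : V → V → W), ∃ K : Set V, IsHKernel D H ς K

/-- `H` is bicomplete: the vertex set splits as `X ⊔ Xᶜ`, both parts induce
complete digraphs (with loops), and all arcs from `Xᶜ` to `X` are present. -/
def IsBicomplete {W : Type} (H : W → W → Prop) : Prop :=
  ∃ X : Set W, (∀ a ∈ X, ∀ b ∈ X, H a b) ∧ (∀ a ∉ X, ∀ b ∉ X, H a b) ∧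
    (∀ x ∈ X, ∀ y ∉ X, H y x)

/-- `H` is an expansion of `2K₁`: two nonempty classes, each inducing a
complete looped digraph, with no arcs between them. -/
def IsExpansion2K1 {W : Type} (H : W → W → Prop) : Prop :=
  ∃ C : Set W, C.Nonempty ∧ Cᶜ.Nonempty ∧
    (∀ a ∈ C, ∀ b ∈ C, H a b) ∧ (∀ a ∈ Cᶜ, ∀ b ∈ Cᶜ, H a b) ∧
    (∀ a b, (a ∈ C ∧ b ∈ Cᶜ) ∨ (a ∈ Cᶜ ∧ b ∈ C) → ¬ H a b)


section Aux

variable {V W : Type} {D : V → V → Prop} {H : W → W → Prop} {ς : V → V → W}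

lemma isHWalk_iff (l : List V) : IsHWalk D H ς l ↔ 2 ≤ l.length ∧
    (∀ i (_ : i + 1 < l.length), D l[i] l[i+1]) ∧
    (∀ i (_ : i + 2 < l.length), H (ς l[i] l[i+1]) (ς l[i+1] l[i+2])) := by
  unfold IsHWalk
  refine and_congr_right fun hlen => and_congr ?_ ?_
  · simp only [List.Chain', List.isChain_iff_getElem]
  · simp only [List.Chain', List.isChain_iff_getElem]
    have hL : ((l.zip l.tail).map fun p => ς p.1 p.2).length = l.length - 1 := by
      rw [List.length_map, List.length_zip, List.length_tail]; omega
    constructor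
    · intro h i hi
      have := h i (by omega)
      simpa [List.getElem_zip, List.getElem_tail] using this
    · intro h i hi
      rw [hL] at hi
      have := h i (by omega)
      simpa [List.getElem_zip, List.getElem_tail] using this

lemma hreach_iff (a b : V) : HReach D H ς a b ↔ ∃ l : List V, IsHWalk D H ς l ∧
    (∃ h : 0 < l.length, l[0] = a) ∧ (∃ h : l.length - 1 < l.length, l[l.length - 1] = b) := by
  unfold HReach
  refine exists_congr fun l => and_congr_right fun hl => ?_
  have hlen : 2 ≤ l.length := hl.1
  rw [List.head?_eq_getElem?, List.getLast?_eq_getElem?]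
  rw [List.getElem?_eq_some_iff, List.getElem?_eq_some_iff]

lemma hreach_single (a b : V) (h : D a b) : HReach D H ς a b := by
  rw [hreach_iff]
  refine ⟨[a, b], ⟨by simp, ?_, ?_⟩, ⟨by simp, rfl⟩, ⟨by simp, rfl⟩⟩
  · simpa [List.Chain', List.isChain_pair] using h
  · exact List.IsChain.singleton _

lemma not_hreach_of_no_out (a b : V) (hno : ∀ c, ¬ D a c) : ¬ HReach D H ς a b := by
  rw [hreach_iff]
  rintro ⟨l, hl, ⟨h0, rfl⟩, -⟩
  rw [isHWalk_iff] at hl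
  exact hno _ (hl.2.1 0 (by omega))

end Aux

section Construction

variable {W : Type} (H : W → W → Prop) (k : ℕ) (x c : ℕ → W)

/-- Vertices: `inl (i,j)` are cycle vertices (`j ≤ k`), `inr (i,j)` are gadget sinks. -/
abbrev PV : Type := (ZMod 3 × ℕ) ⊕ (ZMod 3 × ℕ)

def PD : PV → PV → Prop
  | .inl (i,j), .inl (i',j') => (i' = i ∧ j < k ∧ j' = j+1) ∨ (j = k ∧ i' = i+1 ∧ j' = 0)
  | .inl (i,j), .inr (i',j') => i' = i ∧ j' = j ∧ 1 ≤ j ∧ j ≤ k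
  | .inr _, _ => False

def Pc : PV → PV → W
  | .inl (_,j), .inl _ => x j
  | .inl (_,j), .inr _ => c (j-1)
  | .inr _, _ => x 0

variable (hc : ∀ j, j < k → ¬ H (x j) (c j)) (hback : ¬ H (x k) (x 0))

include hc hback in
/-- Characterization of vertices on an H-walk starting at `inl (i,0)`. -/
lemma walk_from_zero (i : ZMod 3) (l : List PV) (hl : IsHWalk (PD k) H (Pc x c) l)
    (h0 : ∀ h : 0 < l.length, l[0] = Sum.inl (i, 0)) :
    ∀ m (hm : m < l.length),
      (m ≤ k ∧ l[m] = Sum.inl (i, m)) ∨ (m = k + 1 ∧ l[m] = Sum.inl (i + 1, 0)) := by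
  rw [isHWalk_iff] at hl
  obtain ⟨hlen, hD, hH⟩ := hl
  intro m
  induction m using Nat.strong_induction_on with
  | _ m IH =>
    intro hm
    match m with
    | 0 => exact Or.inl ⟨Nat.zero_le _, h0 _⟩
    | n + 1 =>
      have hn : n < l.length := by omega
      have harc := hD n (by omega)
      rcases IH n (by omega) hn with ⟨hnk, hv⟩ | ⟨hnk, hv⟩
      · -- l[n] = inl (i, n), n ≤ k
        rw [hv] at harc
        match hb : l[n+1], harc with
        | .inl (i', j'), h =>
          rcases h with ⟨rfl, h1, rfl⟩ | ⟨rfl, rfl, rfl⟩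
          · exact Or.inl ⟨by omega, rfl⟩
          · exact Or.inr ⟨rfl, rfl⟩
        | .inr (i', j'), h =>
          -- next vertex is a gadget sink: impossible
          exfalso
          obtain ⟨-, -, h1, h2⟩ := h
          obtain ⟨n', rfl⟩ : ∃ n', n = n' + 1 := ⟨n - 1, by omega⟩
          · have hprev : l[n'] = Sum.inl (i, n') := by
              rcases IH n' (by omega) (by omega) with ⟨-, hv'⟩ | ⟨h', -⟩
              · exact hv'
              · omega
            have hcol := hH n' (by omega)
            rw [hprev, hv, hb] at hcol
            exact absurd hcol (hc n' (by omega))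

      · -- l[n] = inl (i+1, 0), n = k + 1 : walk cannot continue
        exfalso
        rw [hv] at harc
        obtain rfl := hnk
        · have hprev : l[k] = Sum.inl (i, k) := by
            rcases IH k (by omega) (by omega) with ⟨-, hv'⟩ | ⟨h', -⟩
            · exact hv'
            · omega
          have hcol := hH k (by omega)
          rw [hprev, hv] at hcol
          match hb : l[k+1+1], harc with
          | .inl (i', j'), h =>
            rw [hb] at hcol
            exact hback hcol
          | .inr (i', j'), h => exact absurd h.2.2.1 (by omega)

include hc hback in
lemma reach_from_zero (i : ZMod 3) (b : PV) (hr : HReach (PD k) H (Pc x c) (Sum.inl (i, 0)) b) :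
    (∃ j, 1 ≤ j ∧ j ≤ k ∧ b = Sum.inl (i, j)) ∨ b = Sum.inl (i + 1, 0) := by
  rw [hreach_iff] at hr
  obtain ⟨l, hl, ⟨h0, hv0⟩, ⟨hml, hvl⟩⟩ := hr
  have hlen : 2 ≤ l.length := hl.1
  have := walk_from_zero H k x c hc hback i l hl (fun _ => hv0) (l.length - 1) hml
  rcases this with ⟨h1, h2⟩ | ⟨h1, h2⟩
  · left; exact ⟨l.length - 1, by omega, h1, by rw [← hvl, h2]⟩
  · right; rw [← hvl, h2]

lemma path_exists (hwalk : ∀ i < k, H (x i) (x (i + 1))) (i : ZMod 3) :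
    HReach (PD k) H (Pc x c) (Sum.inl (i, 0)) (Sum.inl (i + 1, 0)) := by
  rw [hreach_iff]
  refine ⟨(List.range (k+2)).map (fun m => if m ≤ k then Sum.inl (i, m) else Sum.inl (i+1, 0)),
    ?_, ⟨by simp, by simp⟩, ⟨by simp, by simp⟩⟩
  rw [isHWalk_iff]
  simp only [List.length_map, List.length_range, List.getElem_map, List.getElem_range]
  refine ⟨by omega, ?_, ?_⟩
  · intro m hm
    by_cases h1 : m ≤ k
    · by_cases h2 : m + 1 ≤ k
      · simp only [if_pos h1, if_pos h2]
        exact Or.inl ⟨rfl, by omega, rfl⟩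
      · simp only [if_pos h1, if_neg h2]
        exact Or.inr ⟨by omega, rfl, rfl⟩
    · omega
  · intro m hm
    have h1 : m ≤ k := by omega
    have hcol : ∀ p q : ZMod 3 × ℕ,
        Pc x c (Sum.inl p) (Sum.inl q) = x p.2 := fun _ _ => rfl
    by_cases h2 : m + 1 ≤ k
    · simp only [if_pos h1, if_pos h2]
      by_cases h3 : m + 2 ≤ k
      · simp only [if_pos h3, hcol]; exact hwalk m (by omega)
      · simp only [if_neg h3, hcol]; exact hwalk m (by omega)
    · omega

end Construction

/-- If `H` has a walk `x₀,…,x_k` such that every `x_j` (`j ≤ k-1`) misses some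
colour and `(x_k, x₀) ∉ A(H)`, then `H` is not a panchromatic pattern. -/
theorem stmt2 {W : Type} (H : W → W → Prop) (k : ℕ) (x : ℕ → W)
    (hwalk : ∀ i < k, H (x i) (x (i + 1)))
    (hmiss : ∀ j < k, ∃ c : W, ¬ H (x j) c)
    (hback : ¬ H (x k) (x 0)) :
    ¬ IsPanchromatic H := by
  classical
  intro hpan
  set c : ℕ → W := fun j => if h : j < k then (hmiss j h).choose else x 0 with hcdef
  have hc : ∀ j, j < k → ¬ H (x j) (c j) := by
    intro j hj
    simp only [hcdef, dif_pos hj]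
    exact (hmiss j hj).choose_spec
  obtain ⟨K, hind, habs⟩ := hpan PV (PD k) (Pc x c)
  -- every gadget sink is in K
  have hz : ∀ p : ZMod 3 × ℕ, Sum.inr p ∈ K := by
    intro p
    by_contra hp
    obtain ⟨b, -, hr⟩ := habs _ hp
    exact not_hreach_of_no_out _ _ (fun q => by cases q <;> exact fun h => h) hr
  -- no interior cycle vertex is in K
  have h2 : ∀ (i : ZMod 3) (j : ℕ), 1 ≤ j → j ≤ k → Sum.inl (i, j) ∉ K := by
    intro i j hj1 hj2 hK
    exact hind _ hK _ (hz (i, j)) (by simp)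
      (hreach_single _ _ (show PD k (Sum.inl (i,j)) (Sum.inr (i,j)) from ⟨rfl, rfl, hj1, hj2⟩))
  -- absorbency at the block heads
  have key : ∀ i : ZMod 3, Sum.inl (i, (0:ℕ)) ∈ K ∨ Sum.inl (i + 1, (0:ℕ)) ∈ K := by
    intro i
    by_cases hK : Sum.inl (i, (0:ℕ)) ∈ K
    · exact Or.inl hK
    · obtain ⟨b, hbK, hr⟩ := habs _ hK
      rcases reach_from_zero H k x c hc hback i b hr with ⟨j, hj1, hj2, rfl⟩ | rfl
      · exact absurd hbK (h2 i j hj1 hj2)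
      · exact Or.inr hbK
  -- independence along the cycle
  have key2 : ∀ i : ZMod 3, ¬ (Sum.inl (i, (0:ℕ)) ∈ K ∧ Sum.inl (i + 1, (0:ℕ)) ∈ K) := by
    rintro i ⟨ha, hb⟩
    refine hind _ ha _ hb ?_ (path_exists H k x c hwalk i)
    have hne : ∀ j : ZMod 3, j ≠ j + 1 := by decide
    intro h
    rw [Sum.inl.injEq, Prod.mk.injEq] at h
    exact hne i h.1
  have e0 : (0 : ZMod 3) + 1 = 1 := by decide
  have e1 : (1 : ZMod 3) + 1 = 2 := by decide
  have e2 : (2 : ZMod 3) + 1 = 0 := by decide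
  have k0 := key 0; have k1 := key 1; have k2 := key 2
  have n0 := key2 0; have n1 := key2 1; have n2 := key2 2
  rw [e0] at k0 n0; rw [e1] at k1 n1; rw [e2] at k2 n2
  tauto
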